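/- arXiv:1704.04732 — 3 statements merged into one kernel-verified Lean document; each statement's English description precedes it below -/
import Mathlib

section
/- Under the GEM(α,θ) sampling construction, for every n ≥ 1: P[ X_j ≠ 1 for all j ∈ {1,…,n} ] = (α+θ)_n / (1+θ)_n. Equivalently, min{m ≥ 1 : X_m = 1} exceeds n with probability (α+θ)_n/(1+θ)_n. -/
open MeasureTheory ProbabilityTheory Finset
open scoped ENNReal

noncomputable section

/-- Stick-breaking frequencies: `stickP H i = H i * ∏_{1 ≤ j < i} (1 - H j)` (for `i ≥ 1`). -/
def stickP (H : ℕ → ℝ) (i : ℕ) : ℝ := H i * ∏ j ∈ Finset.Ico 1 i, (1 - H j)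

/-- `sampleX H u = min {i ≥ 1 : u < P 1 + ⋯ + P i}` where `P = stickP H`. -/
def sampleX (H : ℕ → ℝ) (u : ℝ) : ℕ :=
  sInf {i : ℕ | 1 ≤ i ∧ u < ∑ m ∈ Finset.Icc 1 i, stickP H m}

/-- The value-ordered cluster sizes of the sample `X 1, …, X n`: the list whose `i`-th entry is
the number of indices `j ∈ {1,…,n}` with `X j` equal to the `i`-th smallest distinct value
among `X 1, …, X n`. -/
def valueOrdered (n : ℕ) (X : ℕ → ℕ) : List ℕ :=
  (((Finset.Icc 1 n).image X).sort (· ≤ ·)).map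
    fun v => ((Finset.Icc 1 n).filter fun j => X j = v).card

/-- The GEM(α,θ) sampling construction: `H i` (for `i ≥ 1`) are independent with
Beta(1−α, θ+iα) distribution (density proportional to `x^(-α) * (1-x)^(θ+iα-1)` on `(0,1)`),
the `U j` are i.i.d. uniform on `(0,1)`, and the sequences `(H i)` and `(U j)` are independent. -/
def IsGEM {Ω : Type} [MeasurableSpace Ω] (μ : Measure Ω) (α θ : ℝ)
    (H U : ℕ → Ω → ℝ) : Prop :=
  (∀ i, Measurable (H i)) ∧ (∀ j, Measurable (U j)) ∧
  iIndepFun H μ ∧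
  iIndepFun U μ ∧
  IndepFun (fun ω i => H i ω) (fun ω j => U j ω) μ ∧
  (∀ i, 1 ≤ i → ∃ C : ℝ, 0 < C ∧
    μ.map (H i) = ((volume : Measure ℝ).restrict (Set.Ioo 0 1)).withDensity
      fun x => ENNReal.ofReal (C * x ^ (-α) * (1 - x) ^ (θ + (i : ℝ) * α - 1))) ∧
  (∀ j, μ.map (U j) = (volume : Measure ℝ).restrict (Set.Ioo 0 1))

open scoped ENNReal in
lemma gamma_asc (x : ℝ) (hx : 0 < x) (n : ℕ) :
    Real.Gamma (x + n) = Real.Gamma x * (ascPochhammer ℝ n).eval x := by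
  induction n with
  | zero => simp
  | succ n ih =>
      have hxn : x + (n : ℝ) ≠ 0 := by positivity
      have h : x + ((n : ℕ) + 1 : ℕ) = (x + n) + 1 := by push_cast; ring
      rw [h, Real.Gamma_add_one hxn, ih, ascPochhammer_succ_eval]
      ring

lemma asc_pos (x : ℝ) (hx : 0 < x) (n : ℕ) : 0 < (ascPochhammer ℝ n).eval x := by
  induction n with
  | zero => simp
  | succ n ih => rw [ascPochhammer_succ_eval]; positivity

noncomputable def Breal (a b : ℝ) : ℝ := ∫ x in (0:ℝ)..1, x ^ (a-1) * (1-x) ^ (b-1)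

lemma Breal_eq (a b : ℝ) (ha : 0 < a) (hb : 0 < b) :
    ((Breal a b : ℝ) : ℂ) = Complex.betaIntegral a b := by
  rw [Complex.betaIntegral, Breal, ← intervalIntegral.integral_ofReal]
  refine intervalIntegral.integral_congr_ae ?_
  have hone : ∀ᵐ x : ℝ ∂volume, x ≠ 1 := by
    have h : volume ({1} : Set ℝ) = 0 := measure_singleton 1
    rw [ae_iff]; simpa using h
  filter_upwards [hone] with x hx1 hx
  rw [Set.uIoc_of_le (by norm_num : (0:ℝ) ≤ 1)] at hx
  have hx' : x ∈ Set.Ioo (0:ℝ) 1 := ⟨hx.1, lt_of_le_of_ne hx.2 hx1⟩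
  rw [Complex.ofReal_mul]
  have h1 : ((x:ℂ)) ^ ((a:ℂ)-1) = ((x ^ (a-1) : ℝ) : ℂ) := by
    rw [show ((a:ℂ)-1) = ((a-1 : ℝ) : ℂ) by push_cast; ring,
      Complex.ofReal_cpow hx'.1.le]
  have h2 : ((1:ℂ)-(x:ℂ)) ^ ((b:ℂ)-1) = (((1-x) ^ (b-1) : ℝ) : ℂ) := by
    rw [show ((1:ℂ)-(x:ℂ)) = (((1-x : ℝ)) : ℂ) by push_cast; ring,
      show ((b:ℂ)-1) = ((b-1 : ℝ) : ℂ) by push_cast; ring,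
      Complex.ofReal_cpow (by linarith [hx'.2] : (0:ℝ) ≤ 1 - x)]
  rw [h1, h2]

lemma Breal_gamma (a b : ℝ) (ha : 0 < a) (hb : 0 < b) :
    Real.Gamma a * Real.Gamma b = Real.Gamma (a+b) * Breal a b := by
  have h := Complex.Gamma_mul_Gamma_eq_betaIntegral
    (s := a) (t := b) (by simpa using ha) (by simpa using hb)
  rw [← Breal_eq a b ha hb, Complex.Gamma_ofReal, Complex.Gamma_ofReal,
    show ((a:ℂ) + b) = ((a + b : ℝ) : ℂ) by push_cast; ring, Complex.Gamma_ofReal] at h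
  exact_mod_cast h

lemma Breal_pos (a b : ℝ) (ha : 0 < a) (hb : 0 < b) : 0 < Breal a b := by
  have h := Breal_gamma a b ha hb
  have h1 := Real.Gamma_pos_of_pos ha
  have h2 := Real.Gamma_pos_of_pos hb
  have h3 := Real.Gamma_pos_of_pos (by linarith : 0 < a + b)
  nlinarith

lemma beta_integrable (a b : ℝ) (ha : 0 < a) (hb : 0 < b) :
    IntegrableOn (fun x : ℝ => x ^ (a-1) * (1-x) ^ (b-1)) (Set.Ioo 0 1) volume := by
  have hc : IntervalIntegrable (fun x : ℝ => (x:ℂ) ^ ((a:ℂ)-1) * ((1:ℂ)-x) ^ ((b:ℂ)-1))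
      volume 0 1 := Complex.betaIntegral_convergent (by simpa using ha) (by simpa using hb)
  have hn := hc.norm
  rw [intervalIntegrable_iff, Set.uIoc_of_le (by norm_num : (0:ℝ) ≤ 1)] at hn
  have hn' := hn.mono_set Set.Ioo_subset_Ioc_self
  refine hn'.congr_fun (fun x hx => ?_) measurableSet_Ioo
  dsimp only
  rw [norm_mul,
    Complex.norm_cpow_eq_rpow_re_of_pos hx.1,
    show ((1:ℂ) - (x:ℂ)) = (((1-x:ℝ)):ℂ) by push_cast; ring,
    Complex.norm_cpow_eq_rpow_re_of_pos (by linarith [hx.2] : (0:ℝ) < 1 - x)]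
  simp

lemma K_eq (a b : ℝ) (ha : 0 < a) (hb : 0 < b) :
    ∫⁻ x in Set.Ioo (0:ℝ) 1, ENNReal.ofReal (x ^ (a-1) * (1-x) ^ (b-1))
      = ENNReal.ofReal (Breal a b) := by
  rw [← ofReal_integral_eq_lintegral_ofReal (beta_integrable a b ha hb) ?_]
  · congr 1
    rw [Breal, intervalIntegral.integral_of_le (by norm_num : (0:ℝ) ≤ 1),
      ← integral_Ioc_eq_integral_Ioo]
  · filter_upwards [ae_restrict_mem measurableSet_Ioo] with x hx
    have h1 : (0:ℝ) ≤ x := hx.1.le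
    have h2 : (0:ℝ) ≤ 1 - x := by linarith [hx.2]
    positivity

lemma sampleX_eq_one_iff (H : ℕ → ℝ) (u : ℝ) : sampleX H u = 1 ↔ u < H 1 := by
  have hsum : ∑ m ∈ Finset.Icc 1 1, stickP H m = H 1 := by
    simp [stickP]
  constructor
  · intro h
    have hne : {i : ℕ | 1 ≤ i ∧ u < ∑ m ∈ Finset.Icc 1 i, stickP H m}.Nonempty := by
      by_contra h'
      rw [Set.not_nonempty_iff_eq_empty] at h'
      rw [sampleX, h', Nat.sInf_empty] at h
      exact absurd h (by norm_num)
    have hm := Nat.sInf_mem hne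
    rw [← sampleX] at hm
    rw [h] at hm
    have h2 := hm.2
    rwa [hsum] at h2
  · intro h
    refine le_antisymm (Nat.sInf_le ⟨le_refl 1, by rwa [hsum]⟩) ?_
    have hne : {i : ℕ | 1 ≤ i ∧ u < ∑ m ∈ Finset.Icc 1 i, stickP H m}.Nonempty :=
      ⟨1, le_refl 1, by rwa [hsum]⟩
    exact (Nat.sInf_mem hne).1

theorem stmt_8 {Ω : Type} [MeasurableSpace Ω] (μ : Measure Ω) [IsProbabilityMeasure μ]
    (α θ : ℝ) (hα0 : 0 ≤ α) (hα1 : α < 1) (hθ : -α < θ)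
    (H U : ℕ → Ω → ℝ) (hGEM : IsGEM μ α θ H U)
    (n : ℕ) (hn : 1 ≤ n) :
    (μ {ω | ∀ j ∈ Finset.Icc 1 n, sampleX (fun i => H i ω) (U j ω) ≠ 1}).toReal
      = (ascPochhammer ℝ n).eval (α + θ) / (ascPochhammer ℝ n).eval (1 + θ) := by

  obtain ⟨hHm, hUm, hHind, hUind, hHU, hHlaw, hUlaw⟩ := hGEM
  obtain ⟨C, hC, hlaw⟩ := hHlaw 1 le_rfl
  set a : ℝ := 1 - α with ha_def
  set b : ℝ := θ + α with hb_def
  have hapos : 0 < a := by simp only [ha_def]; linarith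
  have hbpos : 0 < b := by simp only [hb_def]; linarith
  have habpos : 0 < a + b := by linarith
  -- measurability of V
  have hV : Measurable (fun ω => (fun j => U j ω)) := measurable_pi_lambda _ hUm
  -- the event set
  set A : Set (ℝ × (ℕ → ℝ)) := {p | ∀ j ∈ Finset.Icc 1 n, p.1 ≤ p.2 j} with hA_def
  have hA : MeasurableSet A := by
    have h : A = ⋂ j ∈ Finset.Icc 1 n, {p : ℝ × (ℕ → ℝ) | p.1 ≤ p.2 j} := by
      ext p; simp [hA_def]
    rw [h]
    exact MeasurableSet.biInter (Finset.Icc 1 n).countable_toSet fun j _ =>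
      measurableSet_le measurable_fst ((measurable_pi_apply j).comp measurable_snd)
  have hev : {ω | ∀ j ∈ Finset.Icc 1 n, sampleX (fun i => H i ω) (U j ω) ≠ 1}
      = (fun ω => (H 1 ω, fun j => U j ω)) ⁻¹' A := by
    ext ω
    simp only [Set.mem_setOf_eq, Set.mem_preimage, hA_def]
    refine forall₂_congr fun j hj => ?_
    rw [Ne, sampleX_eq_one_iff, not_lt]
  -- independence of H 1 and the U-vector
  have hpair : IndepFun (H 1) (fun ω => (fun j => U j ω)) μ :=
    hHU.comp (measurable_pi_apply 1) measurable_id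
  have hmap : μ.map (fun ω => (H 1 ω, fun j => U j ω))
      = (μ.map (H 1)).prod (μ.map (fun ω => (fun j => U j ω))) :=
    (indepFun_iff_map_prod_eq_prod_map_map (hHm 1).aemeasurable hV.aemeasurable).mp hpair
  -- inner measure
  have hinner : ∀ h : ℝ, (μ.map (fun ω => (fun j => U j ω))) (Prod.mk h ⁻¹' A)
      = (ENNReal.ofReal (min 1 (1-h))) ^ n := by
    intro h
    have hsecm : MeasurableSet (Prod.mk h ⁻¹' A) := measurable_prodMk_left hA
    rw [Measure.map_apply hV hsecm]
    have hpre : (fun ω => (fun j => U j ω)) ⁻¹' (Prod.mk h ⁻¹' A)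
        = ⋂ j ∈ Finset.Icc 1 n, (U j) ⁻¹' Set.Ici h := by
      ext ω; simp [hA_def]
    rw [hpre, hUind.meas_biInter (fun j _ => ⟨Set.Ici h, measurableSet_Ici, rfl⟩)]
    have hfac : ∀ j, μ ((U j) ⁻¹' Set.Ici h) = ENNReal.ofReal (min 1 (1-h)) := by
      intro j
      rw [← Measure.map_apply (hUm j) measurableSet_Ici, hUlaw j,
        Measure.restrict_apply measurableSet_Ici]
      rcases le_or_gt h 0 with h0 | h0
      · have hsub : Set.Ioo (0:ℝ) 1 ⊆ Set.Ici h := fun x hx => le_trans h0 hx.1.le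
        rw [Set.inter_eq_self_of_subset_right hsub,
          Real.volume_Ioo, min_eq_left (by linarith)]
        norm_num
      · have hset : Set.Ici h ∩ Set.Ioo (0:ℝ) 1 = Set.Ico h 1 := by
          ext x
          constructor
          · rintro ⟨hx1, _, hx3⟩; exact ⟨hx1, hx3⟩
          · rintro ⟨hx1, hx2⟩; exact ⟨hx1, lt_of_lt_of_le h0 hx1, hx2⟩
        rw [hset, Real.volume_Ico, min_eq_right (by linarith)]
    simp only [hfac]
    rw [Finset.prod_const, Nat.card_Icc]
    simp
  -- the density
  set f : ℝ → ℝ≥0∞ := fun x => ENNReal.ofReal (C * x ^ (-α) * (1 - x) ^ (θ + (1:ℝ) * α - 1))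
    with hf_def
  have hlaw' : μ.map (H 1) = ((volume : Measure ℝ).restrict (Set.Ioo 0 1)).withDensity f := by
    rw [hlaw, hf_def]; norm_num
  have hfm : Measurable f := by
    apply Measurable.ennreal_ofReal
    fun_prop
  have hgm : Measurable (fun h : ℝ => (ENNReal.ofReal (min 1 (1-h))) ^ n) := by
    apply Measurable.pow_const
    apply Measurable.ennreal_ofReal
    fun_prop
  -- main computation of the measure
  have hmeas : μ {ω | ∀ j ∈ Finset.Icc 1 n, sampleX (fun i => H i ω) (U j ω) ≠ 1}
      = ∫⁻ x in Set.Ioo (0:ℝ) 1,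
          f x * (ENNReal.ofReal (min 1 (1-x))) ^ n ∂(volume : Measure ℝ) := by
    rw [hev, ← Measure.map_apply ((hHm 1).prodMk hV) hA, hmap, Measure.prod_apply hA]
    simp only [hinner]
    rw [hlaw', lintegral_withDensity_eq_lintegral_mul _ hfm hgm]
    rfl
  -- identify the integrand on (0,1)
  have hcong : ∀ x ∈ Set.Ioo (0:ℝ) 1,
      f x * (ENNReal.ofReal (min 1 (1-x))) ^ n
        = ENNReal.ofReal C * ENNReal.ofReal (x ^ (a-1) * (1-x) ^ ((b + n) - 1)) := by
    intro x hx
    have hx0 : (0:ℝ) < x := hx.1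
    have hx1 : (0:ℝ) < 1 - x := by linarith [hx.2]
    have hmin : min 1 (1-x) = 1 - x := min_eq_right (by linarith)
    rw [hf_def, hmin]
    have hpow : (ENNReal.ofReal (1-x)) ^ n = ENNReal.ofReal ((1-x) ^ (n:ℕ)) :=
      (ENNReal.ofReal_pow hx1.le n).symm
    rw [hpow, ← ENNReal.ofReal_mul (by positivity), ← ENNReal.ofReal_mul hC.le]
    congr 1
    have hexp : (1-x) ^ (θ + (1:ℝ) * α - 1) * (1-x) ^ (n:ℕ)
        = (1-x) ^ ((b + n) - 1) := by
      rw [← Real.rpow_natCast (1-x) n, ← Real.rpow_add hx1]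
      congr 1
      simp only [hb_def]; ring
    have hax : x ^ (-α) = x ^ (a-1) := by
      congr 1; simp only [ha_def]; ring
    calc C * x ^ (-α) * (1-x) ^ (θ + (1:ℝ) * α - 1) * (1-x) ^ (n:ℕ)
        = C * (x ^ (-α) * ((1-x) ^ (θ + (1:ℝ) * α - 1) * (1-x) ^ (n:ℕ))) := by ring
      _ = C * (x ^ (a-1) * (1-x) ^ ((b + n) - 1)) := by rw [hexp, hax]
  have hbn : (0:ℝ) < b + n := by positivity
  have hmeas2 : μ {ω | ∀ j ∈ Finset.Icc 1 n, sampleX (fun i => H i ω) (U j ω) ≠ 1}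
      = ENNReal.ofReal C * ENNReal.ofReal (Breal a (b + n)) := by
    rw [hmeas, setLIntegral_congr_fun measurableSet_Ioo hcong,
      lintegral_const_mul' _ _ ENNReal.ofReal_ne_top, K_eq a (b+n) hapos hbn]
  -- normalization
  have hnorm : ENNReal.ofReal C * ENNReal.ofReal (Breal a b) = 1 := by
    have h1 : (μ.map (H 1)) Set.univ = 1 := by
      rw [Measure.map_apply (hHm 1) MeasurableSet.univ]
      simp
    rw [hlaw', withDensity_apply _ MeasurableSet.univ, Measure.restrict_univ] at h1
    have hcong1 : ∀ x ∈ Set.Ioo (0:ℝ) 1,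
        f x = ENNReal.ofReal C * ENNReal.ofReal (x ^ (a-1) * (1-x) ^ (b - 1)) := by
      intro x hx
      have hx0 : (0:ℝ) < x := hx.1
      have hx1 : (0:ℝ) < 1 - x := by linarith [hx.2]
      have hax : x ^ (-α) = x ^ (a-1) := by congr 1; simp only [ha_def]; ring
      have hbx : (1-x) ^ (θ + (1:ℝ) * α - 1) = (1-x) ^ (b-1) := by
        congr 1; simp only [hb_def]; ring
      have hreal : C * x ^ (-α) * (1-x) ^ (θ + (1:ℝ) * α - 1)
          = C * (x ^ (a-1) * (1-x) ^ (b-1)) := by rw [hax, hbx]; ring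
      simp only [hf_def]
      rw [hreal, ENNReal.ofReal_mul hC.le]
    rw [setLIntegral_congr_fun measurableSet_Ioo hcong1,
      lintegral_const_mul' _ _ ENNReal.ofReal_ne_top, K_eq a b hapos hbpos] at h1
    exact h1
  have hCB : C * Breal a b = 1 := by
    rw [← ENNReal.ofReal_mul hC.le] at hnorm
    exact ENNReal.ofReal_eq_one.mp hnorm
  have hBpos := Breal_pos a (b+n) hapos hbn
  rw [hmeas2, ← ENNReal.ofReal_mul hC.le, ENNReal.toReal_ofReal (by positivity)]
  have hPab : 0 < (ascPochhammer ℝ n).eval (a+b) := asc_pos _ habpos n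
  have hGab : Real.Gamma (a+b) ≠ 0 := (Real.Gamma_pos_of_pos habpos).ne'
  have h2 : Real.Gamma a * Real.Gamma (b+(n:ℝ)) = Real.Gamma (a+b+(n:ℝ)) * Breal a (b+(n:ℝ)) := by
    have h := Breal_gamma a (b+(n:ℝ)) hapos hbn
    rwa [show a + (b+(n:ℝ)) = a+b+(n:ℝ) by ring] at h
  have key : (ascPochhammer ℝ n).eval (a+b) * Breal a (b+(n:ℝ))
      = Breal a b * (ascPochhammer ℝ n).eval b := by
    apply mul_left_cancel₀ hGab
    calc Real.Gamma (a+b) * ((ascPochhammer ℝ n).eval (a+b) * Breal a (b+(n:ℝ)))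
        = Real.Gamma (a+b+(n:ℝ)) * Breal a (b+(n:ℝ)) := by
          rw [gamma_asc (a+b) habpos n]; ring
      _ = Real.Gamma a * Real.Gamma (b+(n:ℝ)) := h2.symm
      _ = Real.Gamma a * (Real.Gamma b * (ascPochhammer ℝ n).eval b) := by
          rw [gamma_asc b hbpos n]
      _ = (Real.Gamma (a+b) * Breal a b) * (ascPochhammer ℝ n).eval b := by
          rw [← Breal_gamma a b hapos hbpos]; ring
      _ = Real.Gamma (a+b) * (Breal a b * (ascPochhammer ℝ n).eval b) := by ring
  have hgoal : C * Breal a (b+(n:ℝ))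
      = (ascPochhammer ℝ n).eval b / (ascPochhammer ℝ n).eval (a+b) := by
    rw [eq_div_iff hPab.ne']
    calc C * Breal a (b+(n:ℝ)) * (ascPochhammer ℝ n).eval (a+b)
        = C * ((ascPochhammer ℝ n).eval (a+b) * Breal a (b+(n:ℝ))) := by ring
      _ = C * (Breal a b * (ascPochhammer ℝ n).eval b) := by rw [key]
      _ = (C * Breal a b) * (ascPochhammer ℝ n).eval b := by ring
      _ = (ascPochhammer ℝ n).eval b := by rw [hCB, one_mul]
  rw [show α+θ = b by rw [hb_def]; ring, show (1:ℝ)+θ = a+b by rw [ha_def, hb_def]; ring]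
  exact hgoal
end
end

section
/- For every n ≥ 1 and every composition (n_1,…,n_k) of n, the number of set partitions of {1,…,n} into k blocks B_1,…,B_k satisfying min B_1 < min B_2 < ⋯ < min B_k and #B_i = n_i for all i equals n! · ∏_{i=1}^{k} 1 / ( (n_i − 1)! · (n_i + n_{i+1} + ⋯ + n_k) ). Equivalently, this count equals the multinomial coefficient n!/(n_1!⋯n_k!) multiplied by ∏_{i=1}^{k} n_i/(n_i+⋯+n_k), and in particular the latter expression is a positive integer. -/
open Finset

set_option linter.unusedSectionVars false

def OK {n k : ℕ} (c : Fin k → ℕ) (B : Fin k → Finset (Fin n)) : Prop :=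
  (∀ i, (B i).Nonempty) ∧ (∀ i i', i ≠ i' → Disjoint (B i) (B i')) ∧
  Finset.univ.biUnion B = Finset.univ ∧
  (StrictMono fun i => (B i).min) ∧ ∀ i, (B i).card = c i

lemma min_image_eq {α β : Type*} [LinearOrder α] [LinearOrder β] [DecidableEq β] (f : α ↪o β)
    (s : Finset α) (hs : s.Nonempty) : (s.image f).min = (f (s.min' hs) : WithTop β) := by
  apply le_antisymm
  · exact Finset.min_le (Finset.mem_image_of_mem f (Finset.min'_mem s hs))
  · refine Finset.le_min ?_
    intro b hb
    obtain ⟨y, hy, rfl⟩ := Finset.mem_image.mp hb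
    exact WithTop.coe_le_coe.mpr (f.monotone (Finset.min'_le s y hy))

lemma min_image_lt_min_image {α β : Type*} [LinearOrder α] [LinearOrder β] [DecidableEq β] (f : α ↪o β)
    {s t : Finset α} (hs : s.Nonempty) (ht : t.Nonempty) :
    (s.image f).min < (t.image f).min ↔ s.min < t.min := by
  rw [min_image_eq f s hs, min_image_eq f t ht, ← Finset.coe_min' hs, ← Finset.coe_min' ht]
  rw [WithTop.coe_lt_coe, WithTop.coe_lt_coe, f.lt_iff_lt]

lemma image_filter_mem {α β : Type*} [Fintype α] [DecidableEq β] (f : α ↪ β) (s : Finset β)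
    (hs : ∀ x ∈ s, ∃ y, f y = x) :
    (Finset.univ.filter (fun y => f y ∈ s)).image f = s := by
  ext x
  simp only [Finset.mem_image, Finset.mem_filter, Finset.mem_univ, true_and]
  constructor
  · rintro ⟨y, hy, rfl⟩; exact hy
  · intro hx; obtain ⟨y, rfl⟩ := hs x hx; exact ⟨y, hx, rfl⟩

lemma filter_mem_image {α β : Type*} [Fintype α] [DecidableEq α] [DecidableEq β]
    (f : α ↪ β) (s : Finset α) :
    Finset.univ.filter (fun y => f y ∈ s.image f) = s := by
  ext y
  simp [Finset.mem_image, f.injective.eq_iff]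

lemma Bzero_mem {n k : ℕ} {c : Fin (k+1) → ℕ} {B : Fin (k+1) → Finset (Fin n)}
    (hB : OK c B) (hz : 0 < n) : (⟨0, hz⟩ : Fin n) ∈ B 0 := by
  obtain ⟨hne, hdisj, hcov, hmono, hcard⟩ := hB
  set z : Fin n := ⟨0, hz⟩
  have : z ∈ Finset.univ.biUnion B := by rw [hcov]; exact Finset.mem_univ _
  obtain ⟨i, -, hi⟩ := Finset.mem_biUnion.mp this
  rcases eq_or_ne i 0 with rfl | h0
  · exact hi
  · exfalso
    have h1 : (B 0).min < (B i).min := hmono (Fin.pos_of_ne_zero h0)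
    have h2 : (B i).min ≤ (z : WithTop (Fin n)) := Finset.min_le hi
    have h3 : (z : WithTop (Fin n)) ≤ (B 0).min :=
      Finset.le_min fun b _ => WithTop.coe_le_coe.mpr (by simp [z, Fin.le_def])
    exact absurd ((h1.trans_le h2).trans_le h3) (lt_irrefl _)

theorem step_card {n n' k : ℕ} (c : Fin (k+1) → ℕ) (hcn : c 0 + n' = n) (hz : 0 < n) :
    Nat.card {B : Fin (k+1) → Finset (Fin n) // OK c B}
    = Nat.card {A : Finset (Fin n) // (⟨0, hz⟩ : Fin n) ∈ A ∧ A.card = c 0}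
      * Nat.card {B' : Fin k → Finset (Fin n') // OK (fun i => c i.succ) B'} := by
  set z : Fin n := ⟨0, hz⟩ with hzdef
  have hcompl : ∀ A : Finset (Fin n), A.card = c 0 → Aᶜ.card = n' := by
    intro A hA
    rw [Finset.card_compl, Fintype.card_fin, hA]; omega
  rw [← Nat.card_prod]
  apply Nat.card_congr
  let f : ∀ A : Finset (Fin n), A.card = c 0 → (Fin n' ↪o Fin n) :=
    fun A hA => Aᶜ.orderEmbOfFin (hcompl A hA)
  have hfmem : ∀ A hA y, f A hA y ∈ Aᶜ := fun A hA y => Finset.orderEmbOfFin_mem _ _ _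
  have hfrange : ∀ A hA x, x ∈ Aᶜ → ∃ y, f A hA y = x := by
    intro A hA x hx
    have h := Finset.range_orderEmbOfFin Aᶜ (hcompl A hA)
    have hx' : x ∈ Set.range (f A hA) := by
      rw [show Set.range (f A hA) = ↑Aᶜ from h]; exact hx
    exact hx'
  -- key facts about a valid B
  have hsub : ∀ B : Fin (k+1) → Finset (Fin n), OK c B → ∀ i : Fin k, B i.succ ⊆ (B 0)ᶜ := by
    intro B hB i x hx
    rw [Finset.mem_compl]
    exact Finset.disjoint_left.mp (hB.2.1 i.succ 0 (Fin.succ_ne_zero i)) hx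
  have himg : ∀ B : Fin (k+1) → Finset (Fin n), ∀ hB : OK c B, ∀ i : Fin k,
      (Finset.univ.filter (fun y => f (B 0) (hB.2.2.2.2 0) y ∈ B i.succ)).image
        (f (B 0) (hB.2.2.2.2 0)) = B i.succ := by
    intro B hB i
    exact image_filter_mem _ _ (fun x hx => hfrange (B 0) (hB.2.2.2.2 0) x (hsub B hB i hx))
  refine ⟨fun B => ⟨⟨B.1 0, Bzero_mem B.2 hz, B.2.2.2.2.2 0⟩,
      ⟨fun i => Finset.univ.filter (fun y => f (B.1 0) (B.2.2.2.2.2 0) y ∈ B.1 i.succ), ?_⟩⟩,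
    fun AB => ⟨Fin.cases AB.1.1 (fun i => (AB.2.1 i).image (f AB.1.1 AB.1.2.2)), ?_⟩, ?_, ?_⟩
  · -- forward: OK for the filtered blocks
    obtain ⟨B, hB⟩ := B
    obtain ⟨hne, hdisj, hcov, hmono, hcard⟩ := id hB
    set F := f (B 0) (hB.2.2.2.2 0) with hF
    have himg' := himg B hB
    rw [← hF] at himg'
    have hne' : ∀ i : Fin k, (Finset.univ.filter (fun y => F y ∈ B i.succ)).Nonempty := by
      intro i
      have := hne i.succ
      rw [← himg' i] at this
      exact Finset.Nonempty.of_image this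
    refine ⟨hne', ?_, ?_, ?_, ?_⟩
    · intro i i' hii'
      rw [Finset.disjoint_left]
      intro y hy hy'
      rw [Finset.mem_filter] at hy hy'
      exact Finset.disjoint_left.mp
        (hdisj i.succ i'.succ (fun h => hii' (Fin.succ_injective _ h))) hy.2 hy'.2
    · ext y
      simp only [Finset.mem_biUnion, Finset.mem_univ, true_and, Finset.mem_filter, iff_true]
      have hy : F y ∈ (B 0)ᶜ := hfmem (B 0) (hB.2.2.2.2 0) y
      have : F y ∈ Finset.univ.biUnion B := by rw [hcov]; exact Finset.mem_univ _
      obtain ⟨j, -, hj⟩ := Finset.mem_biUnion.mp this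
      have hj0 : j ≠ 0 := by
        rintro rfl; exact (Finset.mem_compl.mp hy) hj
      obtain ⟨i, rfl⟩ := Fin.eq_succ_of_ne_zero hj0
      exact ⟨i, hj⟩
    · intro i j hij
      refine (min_image_lt_min_image F (hne' i) (hne' j)).mp ?_
      rw [himg' i, himg' j]
      exact hmono (Fin.succ_lt_succ_iff.mpr hij)
    · intro i
      have : ((Finset.univ.filter (fun y => F y ∈ B i.succ)).image F).card = c i.succ := by
        rw [himg' i]; exact hcard i.succ
      rwa [Finset.card_image_of_injective _ F.injective] at this
  · -- backward: OK for the reconstructed blocks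
    obtain ⟨⟨A, hzA, hAc⟩, ⟨B', hB'⟩⟩ := AB
    obtain ⟨hne, hdisj, hcov, hmono, hcard⟩ := id hB'
    set F := f A hAc with hF
    have hFc : ∀ i : Fin k, ((B' i).image F) ⊆ Aᶜ := by
      intro i x hx
      obtain ⟨y, -, rfl⟩ := Finset.mem_image.mp hx
      exact hfmem A hAc y
    refine ⟨?_, ?_, ?_, ?_, ?_⟩
    · intro j
      induction j using Fin.cases with
      | zero => exact ⟨z, hzA⟩
      | succ i => exact (hne i).image F
    · intro j j' hjj'
      induction j using Fin.cases with
      | zero =>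
        induction j' using Fin.cases with
        | zero => exact absurd rfl hjj'
        | succ i' =>
          rw [Finset.disjoint_left]
          intro x hx hx'
          exact (Finset.mem_compl.mp (hFc i' hx')) hx
      | succ i =>
        induction j' using Fin.cases with
        | zero =>
          rw [Finset.disjoint_right]
          intro x hx hx'
          exact (Finset.mem_compl.mp (hFc i hx')) hx
        | succ i' =>
          exact (Finset.disjoint_image F.injective).mpr
            (hdisj i i' (fun h => hjj' (by rw [h])))
    · ext x
      simp only [Finset.mem_biUnion, Finset.mem_univ, true_and, iff_true]
      by_cases hxA : x ∈ A
      · exact ⟨0, hxA⟩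
      · obtain ⟨y, rfl⟩ := hfrange A hAc x (Finset.mem_compl.mpr hxA)
        have : y ∈ Finset.univ.biUnion B' := by rw [hcov]; exact Finset.mem_univ _
        obtain ⟨i, -, hi⟩ := Finset.mem_biUnion.mp this
        exact ⟨i.succ, Finset.mem_image_of_mem _ hi⟩
    · intro j j' hjj'
      induction j using Fin.cases with
      | zero =>
        obtain ⟨i', rfl⟩ := Fin.eq_succ_of_ne_zero (Fin.pos_iff_ne_zero.mp hjj')
        show A.min < ((B' i').image ⇑F).min
        have hAmin : A.min = (z : WithTop (Fin n)) := by
          refine le_antisymm (Finset.min_le hzA) ?_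
          exact Finset.le_min fun b _ => WithTop.coe_le_coe.mpr (by simp [z, Fin.le_def])
        have hne' : ((B' i').image ⇑F).Nonempty := (hne i').image _
        have hm := Finset.min'_mem _ hne'
        have hmc : ((B' i').image ⇑F).min' hne' ∈ Aᶜ := hFc i' hm
        rw [Finset.mem_compl] at hmc
        have hzle : z ≤ ((B' i').image ⇑F).min' hne' := by simp [z, Fin.le_def]
        have hzlt : z < ((B' i').image ⇑F).min' hne' :=
          lt_of_le_of_ne hzle (fun h => hmc (h ▸ hzA))
        calc A.min = (z : WithTop (Fin n)) := hAmin
          _ < ↑(((B' i').image ⇑F).min' hne') := WithTop.coe_lt_coe.mpr hzlt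
          _ = ((B' i').image ⇑F).min := Finset.coe_min' hne'
      | succ i =>
        induction j' using Fin.cases with
        | zero => exact absurd hjj' (not_lt.mpr (Fin.zero_le _))
        | succ i' =>
          show ((B' i).image ⇑F).min < ((B' i').image ⇑F).min
          exact (min_image_lt_min_image F (hne i) (hne i')).mpr
            (hmono (Fin.succ_lt_succ_iff.mp hjj'))
    · intro j
      induction j using Fin.cases with
      | zero => exact hAc
      | succ i =>
        show ((B' i).image F).card = c i.succ
        rw [Finset.card_image_of_injective _ F.injective]
        exact hcard i
  · -- left inverse
    rintro ⟨B, hB⟩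
    apply Subtype.ext
    funext j
    induction j using Fin.cases with
    | zero => rfl
    | succ i =>
      show (Finset.univ.filter (fun y => f (B 0) (hB.2.2.2.2 0) y ∈ B i.succ)).image ⇑(f (B 0) (hB.2.2.2.2 0)) = B i.succ
      exact himg B hB i
  · -- right inverse
    rintro ⟨⟨A, hzA, hAc⟩, ⟨B', hB'⟩⟩
    refine Prod.ext (Subtype.ext rfl) (Subtype.ext ?_)
    funext i
    show Finset.univ.filter (fun y => f A hAc y ∈ (B' i).image (f A hAc)) = B' i
    exact filter_mem_image _ _


lemma sum_Ici_succ {k : ℕ} (c : Fin (k+1) → ℕ) (i : Fin k) :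
    ∑ j ∈ Ici i.succ, c j = ∑ j ∈ Ici i, c j.succ := by
  rw [show Ici i.succ = (Ici i).map (Fin.succEmb k) from ?_, Finset.sum_map]
  · rfl
  · ext j
    simp only [Finset.mem_map, Finset.mem_Ici, Fin.succEmb]
    constructor
    · intro hj
      have hj0 : j ≠ 0 := by
        intro h; rw [h] at hj; exact absurd hj (by simp [Fin.le_def])
      refine ⟨j.pred hj0, ?_, Fin.succ_pred _ hj0⟩
      rw [← Fin.succ_le_succ_iff, Fin.succ_pred]
      exact hj
    · rintro ⟨a, ha, rfl⟩
      exact Fin.succ_le_succ_iff.mpr ha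

lemma cardA {α : Type*} [Fintype α] [DecidableEq α] (z : α) (m : ℕ) (hm : 1 ≤ m) :
    Nat.card {A : Finset α // z ∈ A ∧ A.card = m} = (Fintype.card α - 1).choose (m - 1) := by
  have e : {A : Finset α // z ∈ A ∧ A.card = m} ≃
      ↥(Finset.powersetCard (m - 1) (({z} : Finset α)ᶜ)) := by
    refine ⟨fun A => ⟨A.1.erase z, ?_⟩, fun D => ⟨insert z D.1, ?_⟩, ?_, ?_⟩
    · rw [Finset.mem_powersetCard]
      refine ⟨fun x hx => ?_, ?_⟩
      · simp only [Finset.mem_compl, Finset.mem_singleton]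
        exact (Finset.mem_erase.mp hx).1
      · rw [Finset.card_erase_of_mem A.2.1, A.2.2]
    · have hD := Finset.mem_powersetCard.mp D.2
      have h0D : z ∉ D.1 := by
        intro h; have := hD.1 h; simp at this
      refine ⟨Finset.mem_insert_self _ _, ?_⟩
      rw [Finset.card_insert_of_notMem h0D, hD.2]; omega
    · rintro ⟨A, h0, hc⟩
      apply Subtype.ext
      simp only
      exact Finset.insert_erase h0
    · rintro ⟨D, hD⟩
      have hD' := Finset.mem_powersetCard.mp hD
      have h0D : z ∉ D := by
        intro h; have := hD'.1 h; simp at this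
      apply Subtype.ext
      simp only
      exact Finset.erase_insert h0D
  rw [Nat.card_congr e, Nat.card_eq_finsetCard, Finset.card_powersetCard]
  congr 1
  rw [Finset.card_compl, Finset.card_singleton]

lemma key : ∀ (k : ℕ) (c : Fin k → ℕ), (∀ i, 0 < c i) → ∀ n, (∑ i, c i) = n →
    Nat.card {B : Fin k → Finset (Fin n) // OK c B} *
      ∏ i, (Nat.factorial (c i - 1) * ∑ j ∈ Finset.Ici i, c j) = n.factorial := by
  intro k
  induction k with
  | zero =>
    intro c hc n hsum
    have hn0 : n = 0 := by simpa using hsum.symm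
    subst hn0
    haveI : Unique {B : Fin 0 → Finset (Fin 0) // OK c B} := by
      refine ⟨⟨⟨fun i => i.elim0, ?_, ?_, ?_, ?_, ?_⟩⟩, ?_⟩
      · exact fun i => i.elim0
      · exact fun i => i.elim0
      · ext x; exact x.elim0
      · exact fun a => a.elim0
      · exact fun i => i.elim0
      · exact fun B => Subtype.ext (funext fun i => i.elim0)
    rw [Nat.card_unique]
    simp
  | succ k ih =>
    intro c hc n hsum
    have h0 : 0 < c 0 := hc 0
    set n' := ∑ i : Fin k, c i.succ with hn'
    have hcn : c 0 + n' = n := by rw [← hsum, Fin.sum_univ_succ]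
    have hnpos : 0 < n := by omega
    have hIH := ih (fun i => c i.succ) (fun i => hc i.succ) n' rfl
    rw [step_card c hcn hnpos, cardA (⟨0, hnpos⟩ : Fin n) (c 0) h0, Fintype.card_fin]
    rw [Fin.prod_univ_succ]
    have hIci0 : Finset.Ici (0 : Fin (k+1)) = Finset.univ := by
      ext j; simp [Fin.zero_le]
    rw [hIci0, hsum]
    have htail : ∏ i : Fin k, (Nat.factorial (c i.succ - 1) * ∑ j ∈ Finset.Ici i.succ, c j)
        = ∏ i : Fin k, (Nat.factorial (c i.succ - 1) * ∑ j ∈ Finset.Ici i, c j.succ) := by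
      refine Finset.prod_congr rfl fun i _ => ?_
      rw [sum_Ici_succ]
    rw [htail]
    have hle : c 0 - 1 ≤ n - 1 := by omega
    have hch := Nat.choose_mul_factorial_mul_factorial hle
    have hsub' : n - 1 - (c 0 - 1) = n' := by omega
    rw [hsub'] at hch
    calc (n-1).choose (c 0 - 1) * Nat.card {B' : Fin k → Finset (Fin n') // OK (fun i => c i.succ) B'}
          * ((c 0 - 1).factorial * n *
            ∏ i : Fin k, (Nat.factorial (c i.succ - 1) * ∑ j ∈ Finset.Ici i, c j.succ))
        = ((n-1).choose (c 0 - 1) * (c 0 - 1).factorial * n'.factorial) * n := by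
          rw [← hIH]; ring
      _ = n.factorial := by rw [hch, mul_comm, Nat.mul_factorial_pred hnpos.ne']

theorem stmt_14 (n k : ℕ) (hn : 1 ≤ n) (hk : 1 ≤ k)
    (c : Fin k → ℕ) (hc : ∀ i, 0 < c i) (hsum : ∑ i, c i = n) :
    -- the number of set partitions of {1,…,n} into k blocks B_1,…,B_k listed in order of
    -- appearance (increasing least elements) with #B_i = c i
    ((Nat.card {B : Fin k → Finset (Fin n) //
        (∀ i, (B i).Nonempty) ∧ (∀ i i', i ≠ i' → Disjoint (B i) (B i')) ∧
        Finset.univ.biUnion B = Finset.univ ∧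
        (StrictMono fun i => (B i).min) ∧ ∀ i, (B i).card = c i} : ℝ)
        = (Nat.factorial n : ℝ)
          * ∏ i : Fin k,
              1 / ((Nat.factorial (c i - 1) : ℝ) * ∑ j ∈ Finset.Ici i, (c j : ℝ)))
    ∧ ((Nat.card {B : Fin k → Finset (Fin n) //
        (∀ i, (B i).Nonempty) ∧ (∀ i i', i ≠ i' → Disjoint (B i) (B i')) ∧
        Finset.univ.biUnion B = Finset.univ ∧
        (StrictMono fun i => (B i).min) ∧ ∀ i, (B i).card = c i} : ℝ)
        = ((Nat.factorial n : ℝ) / ∏ i : Fin k, (Nat.factorial (c i) : ℝ))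
          * ∏ i : Fin k, (c i : ℝ) / ∑ j ∈ Finset.Ici i, (c j : ℝ))
    ∧ 0 < Nat.card {B : Fin k → Finset (Fin n) //
        (∀ i, (B i).Nonempty) ∧ (∀ i i', i ≠ i' → Disjoint (B i) (B i')) ∧
        Finset.univ.biUnion B = Finset.univ ∧
        (StrictMono fun i => (B i).min) ∧ ∀ i, (B i).card = c i} := by
  have hkey := key k c hc n hsum
  set N := Nat.card {B : Fin k → Finset (Fin n) // OK c B} with hNdef
  have hSpos : ∀ i : Fin k, 0 < ∑ j ∈ Finset.Ici i, c j := fun i =>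
    lt_of_lt_of_le (hc i)
      (Finset.single_le_sum (fun j _ => Nat.zero_le _) (Finset.mem_Ici.mpr le_rfl))
  have hcast : (N : ℝ) * ∏ i : Fin k,
      ((Nat.factorial (c i - 1) : ℝ) * ∑ j ∈ Finset.Ici i, (c j : ℝ)) = (Nat.factorial n : ℝ) := by
    rw [← hkey]
    push_cast
    ring
  have hprodpos : ∀ i : Fin k,
      (0:ℝ) < (Nat.factorial (c i - 1) : ℝ) * ∑ j ∈ Finset.Ici i, (c j : ℝ) := by
    intro i
    apply mul_pos
    · exact_mod_cast Nat.factorial_pos _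
    · have := hSpos i
      push_cast [← Nat.cast_sum]
      exact_mod_cast this
  have hPne : (∏ i : Fin k, ((Nat.factorial (c i - 1) : ℝ) * ∑ j ∈ Finset.Ici i, (c j : ℝ))) ≠ 0 :=
    (Finset.prod_pos fun i _ => hprodpos i).ne'
  have h1 : (N : ℝ) = (Nat.factorial n : ℝ)
      * ∏ i : Fin k, 1 / ((Nat.factorial (c i - 1) : ℝ) * ∑ j ∈ Finset.Ici i, (c j : ℝ)) := by
    rw [← hcast]
    simp only [one_div]
    rw [Finset.prod_inv_distrib, mul_assoc, mul_inv_cancel₀ hPne, mul_one]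
  have h2 : (N : ℝ) = ((Nat.factorial n : ℝ) / ∏ i : Fin k, (Nat.factorial (c i) : ℝ))
      * ∏ i : Fin k, (c i : ℝ) / ∑ j ∈ Finset.Ici i, (c j : ℝ) := by
    rw [h1, div_mul_eq_mul_div, mul_div_assoc]
    congr 1
    rw [← Finset.prod_div_distrib]
    refine Finset.prod_congr rfl fun i _ => ?_
    have hfac : ((Nat.factorial (c i)) : ℝ) = (c i : ℝ) * (Nat.factorial (c i - 1) : ℝ) := by
      rw [← Nat.mul_factorial_pred (hc i).ne']
      push_cast
      ring
    have hS : (0:ℝ) < ∑ j ∈ Finset.Ici i, (c j : ℝ) := by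
      have := hSpos i
      push_cast [← Nat.cast_sum]
      exact_mod_cast this
    have hcpos : (0:ℝ) < (c i : ℝ) := by exact_mod_cast hc i
    have hfpos : (0:ℝ) < (Nat.factorial (c i - 1) : ℝ) := by
      exact_mod_cast Nat.factorial_pos _
    rw [hfac]
    field_simp
  have h3 : 0 < N := by
    rcases Nat.eq_zero_or_pos N with h | h
    · rw [h, zero_mul] at hkey
      exact absurd hkey.symm (Nat.factorial_pos n).ne'
    · exact h
  exact ⟨h1, h2, h3⟩
end

section
/- Fix α ∈ [0,1) and strictly positive reals V_{k:n} (1 ≤ k ≤ n < ∞) satisfying the consistency relation V_{k:n} = (n−kα)·V_{k:n+1} + V_{k+1:n+1} for all 1 ≤ k ≤ n. For a composition (n_1,…,n_k) of n define p̃(n_1,…,n_k) = V_{k:n} · ( ∏_{i=1}^{k}(1−α)_{n_i−1} ) · ∏_{i=1}^{k} (n_i−α)/((n_i+n_{i+1}+⋯+n_k)−(k−i+1)α). Then for every composition (n_1,…,n_k) of n: p̃(n_1,…,n_k) = ∑_{j=1}^{k+1} p̃(n_1,…,n_{j−1},1,n_j,…,n_k) + ∑_{j=1}^{k} p̃(n_1,…,n_{j−1},n_j+1,n_{j+1},…,n_k).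 In particular, the value-ordered transition probabilities of the ordered Chinese restaurant process for a Gibbs(α) model sum to one. -/
noncomputable section

/-- The value-ordered composition probability function of a Gibbs(α) model:
`tpFun α V (n_1,…,n_k) = V_{k:n} · ∏ (1−α)_{n_i−1} · ∏ (n_i−α)/((n_i+⋯+n_k)−(k−i+1)α)`. -/
def tpFun (α : ℝ) (V : ℕ → ℕ → ℝ) (L : List ℕ) : ℝ :=
  V L.length L.sum
    * (∏ i ∈ Finset.range L.length, (ascPochhammer ℝ (L.getD i 0 - 1)).eval (1 - α))
    * ∏ i ∈ Finset.range L.length,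
        ((L.getD i 0 : ℝ) - α)
          / (((L.drop i).sum : ℝ) - ((L.length - i : ℕ) : ℝ) * α)



namespace G15

lemma ins_sum (a : ℕ) : ∀ (j : ℕ) (L : List ℕ), j ≤ L.length →
    (List.insertIdx L j a).sum = 1 * a + L.sum := by
  intro j
  induction j with
  | zero => intro L _; simp
  | succ j ih =>
    intro L hj
    cases L with
    | nil => simp at hj
    | cons x T =>
      simp only [List.insertIdx_succ_cons, List.sum_cons, ih T (by simpa using hj)]
      ring

lemma ins_drop_le {α : Type*} (a : α) : ∀ (i j : ℕ) (L : List α), i ≤ j → j ≤ L.length →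
    List.drop i (List.insertIdx L j a) = List.insertIdx (List.drop i L) (j - i) a := by
  intro i
  induction i with
  | zero => intro j L _ _; simp
  | succ i ih =>
    intro j L hij hj
    obtain ⟨j', rfl⟩ : ∃ j', j = j' + 1 := ⟨j - 1, by omega⟩
    cases L with
    | nil => simp at hj
    | cons x T =>
      simp only [List.insertIdx_succ_cons, List.drop_succ_cons,
        Nat.succ_sub_succ]
      exact ih j' T (by omega) (by simpa using hj)

lemma ins_drop_gt {α : Type*} (a : α) : ∀ (j i : ℕ) (L : List α), j ≤ i →
    List.drop (i + 1) (List.insertIdx L j a) = List.drop i L := by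
  intro j
  induction j with
  | zero => intro i L _; simp
  | succ j ih =>
    intro i L hji
    cases L with
    | nil => simp
    | cons x T =>
      obtain ⟨i', rfl⟩ : ∃ i', i = i' + 1 := ⟨i - 1, by omega⟩
      simp only [List.insertIdx_succ_cons, List.drop_succ_cons]
      exact ih i' T (by omega)

lemma ins_getD_lt (a d : ℕ) : ∀ (i j : ℕ) (L : List ℕ), i < j →
    (List.insertIdx L j a).getD i d = L.getD i d := by
  intro i
  induction i with
  | zero =>
    intro j L hij
    obtain ⟨j', rfl⟩ : ∃ j', j = j' + 1 := ⟨j - 1, by omega⟩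
    cases L with
    | nil => simp
    | cons x T => simp
  | succ i ih =>
    intro j L hij
    obtain ⟨j', rfl⟩ : ∃ j', j = j' + 1 := ⟨j - 1, by omega⟩
    cases L with
    | nil => simp
    | cons x T =>
      simp only [List.insertIdx_succ_cons, List.getD_cons_succ]
      exact ih j' T (by omega)

lemma ins_getD_self (a d : ℕ) : ∀ (j : ℕ) (L : List ℕ), j ≤ L.length →
    (List.insertIdx L j a).getD j d = a := by
  intro j
  induction j with
  | zero => intro L _; simp
  | succ j ih =>
    intro L hj
    cases L with
    | nil => simp at hj
    | cons x T =>
      simp only [List.insertIdx_succ_cons, List.getD_cons_succ]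
      exact ih T (by simpa using hj)

lemma ins_getD_gt (a d : ℕ) : ∀ (j i : ℕ) (L : List ℕ), j ≤ i →
    (List.insertIdx L j a).getD (i + 1) d = L.getD i d := by
  intro j
  induction j with
  | zero => intro i L _; simp
  | succ j ih =>
    intro i L hji
    cases L with
    | nil => simp
    | cons x T =>
      obtain ⟨i', rfl⟩ : ∃ i', i = i' + 1 := ⟨i - 1, by omega⟩
      simp only [List.insertIdx_succ_cons, List.getD_cons_succ]
      exact ih i' T (by omega)

lemma set_sum : ∀ (j : ℕ) (L : List ℕ) (v : ℕ), j < L.length →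
    (L.set j v).sum + L.getD j 0 = L.sum + v := by
  intro j
  induction j with
  | zero =>
    intro L v hj
    cases L with
    | nil => simp at hj
    | cons x T => simp [List.set]; ring
  | succ j ih =>
    intro L v hj
    cases L with
    | nil => simp at hj
    | cons x T =>
      simp only [List.set, List.sum_cons, List.getD_cons_succ]
      have := ih T v (by simpa using hj)
      omega

lemma set_drop_le {α : Type*} : ∀ (i j : ℕ) (L : List α) (v : α), i ≤ j →
    List.drop i (L.set j v) = (List.drop i L).set (j - i) v := by
  intro i
  induction i with
  | zero => intro j L v _; simp
  | succ i ih =>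
    intro j L v hij
    obtain ⟨j', rfl⟩ : ∃ j', j = j' + 1 := ⟨j - 1, by omega⟩
    cases L with
    | nil => simp
    | cons x T =>
      simp only [List.set, List.drop_succ_cons, Nat.succ_sub_succ]
      exact ih j' T v (by omega)

lemma set_drop_gt {α : Type*} : ∀ (j i : ℕ) (L : List α) (v : α), j < i →
    List.drop i (L.set j v) = List.drop i L := by
  intro j
  induction j with
  | zero =>
    intro i L v hji
    cases L with
    | nil => simp
    | cons x T =>
      obtain ⟨i', rfl⟩ : ∃ i', i = i' + 1 := ⟨i - 1, by omega⟩
      simp [List.set]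
  | succ j ih =>
    intro i L v hji
    cases L with
    | nil => simp
    | cons x T =>
      obtain ⟨i', rfl⟩ : ∃ i', i = i' + 1 := ⟨i - 1, by omega⟩
      simp only [List.set, List.drop_succ_cons]
      exact ih i' T v (by omega)

lemma getD_set_self : ∀ (j : ℕ) (L : List ℕ) (v : ℕ), j < L.length →
    (L.set j v).getD j 0 = v := by
  intro j
  induction j with
  | zero =>
    intro L v hj
    cases L with
    | nil => simp at hj
    | cons x T => simp [List.set]
  | succ j ih =>
    intro L v hj
    cases L with
    | nil => simp at hj
    | cons x T =>
      simp only [List.set, List.getD_cons_succ]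
      exact ih T v (by simpa using hj)

lemma getD_set_ne : ∀ (i j : ℕ) (L : List ℕ) (v : ℕ), i ≠ j →
    (L.set j v).getD i 0 = L.getD i 0 := by
  intro i
  induction i with
  | zero =>
    intro j L v hij
    obtain ⟨j', rfl⟩ : ∃ j', j = j' + 1 := ⟨j - 1, by omega⟩
    cases L with
    | nil => simp
    | cons x T => simp [List.set]
  | succ i ih =>
    intro j L v hij
    cases L with
    | nil => simp
    | cons x T =>
      cases j with
      | zero => simp [List.set]
      | succ j' =>
        simp only [List.set, List.getD_cons_succ]
        exact ih j' T v (by omega)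

lemma getD_drop : ∀ (i j : ℕ) (L : List ℕ), (List.drop i L).getD j 0 = L.getD (i + j) 0 := by
  intro i
  induction i with
  | zero => intro j L; simp
  | succ i ih =>
    intro j L
    cases L with
    | nil => simp
    | cons x T =>
      simp only [List.drop_succ_cons]
      rw [ih j T]
      simp [Nat.succ_add]

lemma drop_eq_getD_cons : ∀ (i : ℕ) (L : List ℕ), i < L.length →
    List.drop i L = L.getD i 0 :: List.drop (i + 1) L := by
  intro i L hi
  rw [List.getD_eq_getElem _ _ hi]
  exact (List.cons_getElem_drop_succ (h := hi)).symm

end G15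

namespace G15

noncomputable def Dd (α : ℝ) (L : List ℕ) (i : ℕ) : ℝ :=
  ((L.drop i).sum : ℝ) - ((L.length - i : ℕ) : ℝ) * α

noncomputable def Nm (α : ℝ) (L : List ℕ) (i : ℕ) : ℝ := ((L.getD i 0 : ℝ)) - α

noncomputable def Wf (α : ℝ) (L : List ℕ) : ℝ :=
  ∏ i ∈ Finset.range L.length, (ascPochhammer ℝ (L.getD i 0 - 1)).eval (1 - α)

noncomputable def Cf (α : ℝ) (L : List ℕ) : ℝ :=
  ∏ i ∈ Finset.range L.length, Nm α L i / Dd α L i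

lemma Dd_ge (α : ℝ) (L : List ℕ) {i : ℕ} (h : L.length ≤ i) : Dd α L i = 0 := by
  simp [Dd, List.drop_eq_nil_of_le h, Nat.sub_eq_zero_of_le h]

lemma getD_pos {L : List ℕ} (hL : ∀ x ∈ L, 0 < x) {i : ℕ} (hi : i < L.length) :
    0 < L.getD i 0 := by
  rw [List.getD_eq_getElem _ _ hi]
  exact hL _ (L.getElem_mem hi)

lemma Dd_step (α : ℝ) (L : List ℕ) {i : ℕ} (hi : i < L.length) :
    Dd α L i = Nm α L i + Dd α L (i + 1) := by
  have h1 : (L.drop i).sum = L.getD i 0 + (L.drop (i + 1)).sum := by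
    rw [drop_eq_getD_cons i L hi]; simp
  have h2 : L.length - i = (L.length - (i + 1)) + 1 := by omega
  simp only [Dd, Nm, h1, h2]
  push_cast
  ring

lemma Dd_nonneg {α : ℝ} (hα1 : α < 1) {L : List ℕ} (hL : ∀ x ∈ L, 0 < x) :
    ∀ i, 0 ≤ Dd α L i := by
  have key : ∀ m i, L.length - i ≤ m → 0 ≤ Dd α L i := by
    intro m
    induction m with
    | zero => intro i h; rw [Dd_ge α L (by omega)]
    | succ m ih =>
      intro i h
      by_cases hi : L.length ≤ i
      · rw [Dd_ge α L hi]
      · push_neg at hi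
        rw [Dd_step α L hi]
        have h1 : 1 ≤ L.getD i 0 := getD_pos hL hi
        have h2 : (1 : ℝ) ≤ (L.getD i 0 : ℝ) := by exact_mod_cast h1
        have h3 := ih (i + 1) (by omega)
        simp only [Nm]
        linarith
  exact fun i => key _ i le_rfl

lemma Dd_pos {α : ℝ} (hα1 : α < 1) {L : List ℕ} (hL : ∀ x ∈ L, 0 < x) {i : ℕ}
    (hi : i < L.length) : 0 < Dd α L i := by
  rw [Dd_step α L hi]
  have h1 : 1 ≤ L.getD i 0 := getD_pos hL hi
  have h2 : (1 : ℝ) ≤ (L.getD i 0 : ℝ) := by exact_mod_cast h1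
  have h3 := Dd_nonneg hα1 hL (i + 1)
  simp only [Nm]
  linarith

lemma sumA (a : ℕ → ℝ) : ∀ m, ∑ j ∈ Finset.range m, (1 - a j) * ∏ i ∈ Finset.range j, a i
    = 1 - ∏ i ∈ Finset.range m, a i := by
  intro m
  induction m with
  | zero => simp
  | succ m ih => rw [Finset.sum_range_succ, ih, Finset.prod_range_succ]; ring

lemma sumB (D : ℕ → ℝ) (h : ∀ i, D i + 1 ≠ 0) : ∀ m,
    ∑ j ∈ Finset.range m, (D j + 1 - D (j + 1)) * ∏ i ∈ Finset.range (j + 1), D i / (D i + 1)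
      = D 0 - D m * ∏ i ∈ Finset.range m, D i / (D i + 1) := by
  intro m
  induction m with
  | zero => simp
  | succ m ih =>
    rw [Finset.sum_range_succ, ih]
    have hm := h m
    have key : (D m + 1) * (∏ i ∈ Finset.range (m + 1), D i / (D i + 1))
        = D m * ∏ i ∈ Finset.range m, D i / (D i + 1) := by
      rw [Finset.prod_range_succ]
      have key2 : D m / (D m + 1) * (D m + 1) = D m := div_mul_cancel₀ _ hm
      linear_combination (∏ i ∈ Finset.range m, D i / (D i + 1)) * key2
    linear_combination key

lemma prod_split (g : ℕ → ℝ) {j m : ℕ} (h : j < m) :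
    ∏ i ∈ Finset.range m, g i
      = ((∏ i ∈ Finset.range j, g i) * g j) * ∏ i ∈ Finset.Ico (j + 1) m, g i := by
  rw [Finset.range_eq_Ico, ← Finset.prod_Ico_consecutive g (Nat.zero_le j) (le_of_lt h),
    Finset.prod_eq_prod_Ico_succ_bot h g, ← Finset.range_eq_Ico, mul_assoc]

lemma wsplit (α : ℝ) (L : List ℕ) {j : ℕ} (hj : j ≤ L.length) :
    Wf α L = (∏ i ∈ Finset.range j, (ascPochhammer ℝ (L.getD i 0 - 1)).eval (1 - α))
      * ∏ i ∈ Finset.Ico j L.length, (ascPochhammer ℝ (L.getD i 0 - 1)).eval (1 - α) := by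
  simp only [Wf]
  rw [Finset.range_eq_Ico, ← Finset.prod_Ico_consecutive _ (Nat.zero_le j) hj,
    ← Finset.range_eq_Ico]

lemma csplit (α : ℝ) (L : List ℕ) {j : ℕ} (hj : j ≤ L.length) :
    Cf α L = (∏ i ∈ Finset.range j, Nm α L i / Dd α L i)
      * ∏ i ∈ Finset.Ico j L.length, Nm α L i / Dd α L i := by
  simp only [Cf]
  rw [Finset.range_eq_Ico, ← Finset.prod_Ico_consecutive _ (Nat.zero_le j) hj,
    ← Finset.range_eq_Ico]

end G15

namespace G15

lemma formA {α : ℝ} (hα1 : α < 1) {L : List ℕ} (hL : ∀ x ∈ L, 0 < x)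
    {j : ℕ} (hj : j ≤ L.length) :
    ((∏ i ∈ Finset.range j, Nm α L i / (Dd α L i + 1 - α))
        * ((1 - α) / (Dd α L j + 1 - α)))
        * ∏ i ∈ Finset.Ico j L.length, Nm α L i / Dd α L i
      = Cf α L * ((1 - Dd α L j / (Dd α L j + 1 - α))
          * ∏ i ∈ Finset.range j, Dd α L i / (Dd α L i + 1 - α)) := by
  have hm : (∏ i ∈ Finset.range j, Nm α L i / Dd α L i)
      * ∏ i ∈ Finset.range j, Dd α L i / (Dd α L i + 1 - α)
      = ∏ i ∈ Finset.range j, Nm α L i / (Dd α L i + 1 - α) := by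
    rw [← Finset.prod_mul_distrib]
    refine Finset.prod_congr rfl fun i hi => ?_
    have h0 : Dd α L i ≠ 0 :=
      ne_of_gt (Dd_pos hα1 hL (lt_of_lt_of_le (Finset.mem_range.mp hi) hj))
    rw [div_mul_div_comm, mul_comm (Nm α L i) (Dd α L i), mul_div_mul_left _ _ h0]
  have hpos : (0:ℝ) < Dd α L j + 1 - α := by
    have := Dd_nonneg hα1 hL j; linarith
  have hq : 1 - Dd α L j / (Dd α L j + 1 - α) = (1 - α) / (Dd α L j + 1 - α) := by
    rw [eq_div_iff (ne_of_gt hpos), sub_mul, one_mul,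
      div_mul_cancel₀ _ (ne_of_gt hpos)]
    ring
  rw [csplit α L hj, hq, ← hm]
  ring

lemma tp_ins {α : ℝ} (hα1 : α < 1) (V : ℕ → ℕ → ℝ) {L : List ℕ}
    (hL : ∀ x ∈ L, 0 < x) {j : ℕ} (hj : j ≤ L.length) :
    tpFun α V (L.insertIdx j 1)
      = V (L.length + 1) (L.sum + 1) * Wf α L * Cf α L
        * ((1 - Dd α L j / (Dd α L j + 1 - α))
            * ∏ i ∈ Finset.range j, Dd α L i / (Dd α L i + 1 - α)) := by
  have hlen : (L.insertIdx j 1).length = L.length + 1 := List.length_insertIdx_of_le_length hj 1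
  have hsm : (L.insertIdx j 1).sum = L.sum + 1 := by have := ins_sum 1 j L hj; omega
  have epoch : (∏ i ∈ Finset.range (L.length + 1),
        (ascPochhammer ℝ ((L.insertIdx j 1).getD i 0 - 1)).eval (1 - α)) = Wf α L := by
    rw [prod_split _ (show j < L.length + 1 by omega)]
    rw [show (∏ i ∈ Finset.Ico (j + 1) (L.length + 1),
          (ascPochhammer ℝ ((L.insertIdx j 1).getD i 0 - 1)).eval (1 - α))
        = ∏ i ∈ Finset.Ico j L.length,
          (ascPochhammer ℝ ((L.insertIdx j 1).getD (i + 1) 0 - 1)).eval (1 - α) from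
      (Finset.prod_Ico_add' (fun i =>
        (ascPochhammer ℝ ((L.insertIdx j 1).getD i 0 - 1)).eval (1 - α)) j L.length 1).symm]
    have g1 : ∀ i ∈ Finset.range j,
        (ascPochhammer ℝ ((L.insertIdx j 1).getD i 0 - 1)).eval (1 - α)
          = (ascPochhammer ℝ (L.getD i 0 - 1)).eval (1 - α) := fun i hi => by
      rw [ins_getD_lt 1 0 i j L (Finset.mem_range.mp hi)]
    have g3 : ∀ i ∈ Finset.Ico j L.length,
        (ascPochhammer ℝ ((L.insertIdx j 1).getD (i + 1) 0 - 1)).eval (1 - α)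
          = (ascPochhammer ℝ (L.getD i 0 - 1)).eval (1 - α) := fun i hi => by
      rw [ins_getD_gt 1 0 j i L (Finset.mem_Ico.mp hi).1]
    rw [Finset.prod_congr rfl g1, Finset.prod_congr rfl g3, ins_getD_self 1 0 j L hj]
    norm_num [wsplit α L hj]
  have f1 : ∀ i ∈ Finset.range j,
      (((L.insertIdx j 1).getD i 0 : ℝ) - α)
          / ((((L.insertIdx j 1).drop i).sum : ℝ) - ((L.length + 1 - i : ℕ) : ℝ) * α)
        = Nm α L i / (Dd α L i + 1 - α) := by
    intro i hi
    have hij : i < j := Finset.mem_range.mp hi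
    have hds : ((L.insertIdx j 1).drop i).sum = (L.drop i).sum + 1 := by
      rw [ins_drop_le 1 i j L hij.le hj]
      have := ins_sum 1 (j - i) (L.drop i) (by rw [List.length_drop]; omega)
      omega
    have hm2 : L.length + 1 - i = (L.length - i) + 1 := by omega
    rw [ins_getD_lt 1 0 i j L hij, hds, hm2]
    simp only [Nm, Dd]
    push_cast
    ring
  have f2 : (((L.insertIdx j 1).getD j 0 : ℝ) - α)
        / ((((L.insertIdx j 1).drop j).sum : ℝ) - ((L.length + 1 - j : ℕ) : ℝ) * α)
      = (1 - α) / (Dd α L j + 1 - α) := by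
    have hds : ((L.insertIdx j 1).drop j).sum = (L.drop j).sum + 1 := by
      rw [ins_drop_le 1 j j L le_rfl hj]
      have := ins_sum 1 (j - j) (L.drop j) (by rw [List.length_drop]; omega)
      omega
    have hm2 : L.length + 1 - j = (L.length - j) + 1 := by omega
    rw [ins_getD_self 1 0 j L hj, hds, hm2]
    simp only [Dd]
    push_cast
    ring
  have f3 : ∀ i ∈ Finset.Ico j L.length,
      (((L.insertIdx j 1).getD (i + 1) 0 : ℝ) - α)
          / ((((L.insertIdx j 1).drop (i + 1)).sum : ℝ)
              - ((L.length + 1 - (i + 1) : ℕ) : ℝ) * α)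
        = Nm α L i / Dd α L i := by
    intro i hi
    have h1 : j ≤ i := (Finset.mem_Ico.mp hi).1
    rw [ins_getD_gt 1 0 j i L h1, ins_drop_gt 1 j i L h1,
      show L.length + 1 - (i + 1) = L.length - i from by omega]
    rfl
  have cs : (∏ i ∈ Finset.range (L.length + 1),
        (((L.insertIdx j 1).getD i 0 : ℝ) - α)
          / ((((L.insertIdx j 1).drop i).sum : ℝ) - ((L.length + 1 - i : ℕ) : ℝ) * α))
      = ((∏ i ∈ Finset.range j, Nm α L i / (Dd α L i + 1 - α))
          * ((1 - α) / (Dd α L j + 1 - α)))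
          * ∏ i ∈ Finset.Ico j L.length, Nm α L i / Dd α L i := by
    rw [prod_split _ (show j < L.length + 1 by omega)]
    rw [show (∏ i ∈ Finset.Ico (j + 1) (L.length + 1),
          (((L.insertIdx j 1).getD i 0 : ℝ) - α)
            / ((((L.insertIdx j 1).drop i).sum : ℝ) - ((L.length + 1 - i : ℕ) : ℝ) * α))
        = ∏ i ∈ Finset.Ico j L.length,
          (((L.insertIdx j 1).getD (i + 1) 0 : ℝ) - α)
            / ((((L.insertIdx j 1).drop (i + 1)).sum : ℝ)
                - ((L.length + 1 - (i + 1) : ℕ) : ℝ) * α) from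
      (Finset.prod_Ico_add' (fun i =>
        (((L.insertIdx j 1).getD i 0 : ℝ) - α)
          / ((((L.insertIdx j 1).drop i).sum : ℝ)
              - ((L.length + 1 - i : ℕ) : ℝ) * α)) j L.length 1).symm]
    rw [Finset.prod_congr rfl f1, Finset.prod_congr rfl f3, f2]
  simp only [tpFun, hlen, hsm]
  rw [epoch, cs, formA hα1 hL hj]
  ring

end G15

namespace G15

lemma formB {α : ℝ} (hα1 : α < 1) {L : List ℕ} (hL : ∀ x ∈ L, 0 < x)
    {j : ℕ} (hj : j < L.length) :
    (((∏ i ∈ Finset.range j, Nm α L i / (Dd α L i + 1))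
        * ((Nm α L j + 1) / (Dd α L j + 1)))
        * ∏ i ∈ Finset.Ico (j + 1) L.length, Nm α L i / Dd α L i) * Nm α L j
      = Cf α L * ((Dd α L j + 1 - Dd α L (j + 1))
          * ∏ i ∈ Finset.range (j + 1), Dd α L i / (Dd α L i + 1)) := by
  have hm : (∏ i ∈ Finset.range j, Nm α L i / Dd α L i)
      * ∏ i ∈ Finset.range j, Dd α L i / (Dd α L i + 1)
      = ∏ i ∈ Finset.range j, Nm α L i / (Dd α L i + 1) := by
    rw [← Finset.prod_mul_distrib]
    refine Finset.prod_congr rfl fun i hi => ?_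
    have h0 : Dd α L i ≠ 0 :=
      ne_of_gt (Dd_pos hα1 hL (lt_trans (Finset.mem_range.mp hi) hj))
    rw [div_mul_div_comm, mul_comm (Nm α L i) (Dd α L i), mul_div_mul_left _ _ h0]
  have h0j : Dd α L j ≠ 0 := ne_of_gt (Dd_pos hα1 hL hj)
  have hx : Nm α L j / Dd α L j * (Dd α L j / (Dd α L j + 1))
      = Nm α L j / (Dd α L j + 1) := by
    rw [div_mul_div_comm, mul_comm (Nm α L j) (Dd α L j), mul_div_mul_left _ _ h0j]
  have hstep : Dd α L j + 1 - Dd α L (j + 1) = Nm α L j + 1 := by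
    have := Dd_step α L hj; linarith
  rw [csplit α L (show j + 1 ≤ L.length from hj), Finset.prod_range_succ,
    Finset.prod_range_succ, hstep]
  linear_combination
    (-((∏ i ∈ Finset.Ico (j + 1) L.length, Nm α L i / Dd α L i) * (Nm α L j + 1)
        * (Nm α L j / Dd α L j * (Dd α L j / (Dd α L j + 1))))) * hm
      - ((∏ i ∈ Finset.range j, Nm α L i / (Dd α L i + 1))
          * (∏ i ∈ Finset.Ico (j + 1) L.length, Nm α L i / Dd α L i)
          * (Nm α L j + 1)) * hx

lemma tp_set {α : ℝ} (hα1 : α < 1) (V : ℕ → ℕ → ℝ) {L : List ℕ}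
    (hL : ∀ x ∈ L, 0 < x) {j : ℕ} (hj : j < L.length) :
    tpFun α V (L.set j (L.getD j 0 + 1))
      = V L.length (L.sum + 1) * Wf α L * Cf α L
        * ((Dd α L j + 1 - Dd α L (j + 1))
            * ∏ i ∈ Finset.range (j + 1), Dd α L i / (Dd α L i + 1)) := by
  have hsm : (L.set j (L.getD j 0 + 1)).sum = L.sum + 1 := by
    have := set_sum j L (L.getD j 0 + 1) hj; omega
  have hgd : 1 ≤ L.getD j 0 := getD_pos hL hj
  -- pochhammer factors
  have g1 : ∀ i ∈ Finset.range j,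
      (ascPochhammer ℝ ((L.set j (L.getD j 0 + 1)).getD i 0 - 1)).eval (1 - α)
        = (ascPochhammer ℝ (L.getD i 0 - 1)).eval (1 - α) := fun i hi => by
    rw [getD_set_ne i j L _ (by have := Finset.mem_range.mp hi; omega)]
  have g3 : ∀ i ∈ Finset.Ico (j + 1) L.length,
      (ascPochhammer ℝ ((L.set j (L.getD j 0 + 1)).getD i 0 - 1)).eval (1 - α)
        = (ascPochhammer ℝ (L.getD i 0 - 1)).eval (1 - α) := fun i hi => by
    rw [getD_set_ne i j L _ (by have := (Finset.mem_Ico.mp hi).1; omega)]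
  have g2 : (ascPochhammer ℝ ((L.set j (L.getD j 0 + 1)).getD j 0 - 1)).eval (1 - α)
      = (ascPochhammer ℝ (L.getD j 0 - 1)).eval (1 - α) * Nm α L j := by
    rw [getD_set_self j L _ hj]
    obtain ⟨g, hg⟩ : ∃ g, L.getD j 0 = g + 1 := ⟨L.getD j 0 - 1, by omega⟩
    rw [hg]
    simp only [Nat.add_sub_cancel]
    rw [ascPochhammer_succ_eval]
    simp only [Nm, hg]
    push_cast
    ring
  -- main factors
  have m1 : ∀ i ∈ Finset.range j,
      (((L.set j (L.getD j 0 + 1)).getD i 0 : ℝ) - α)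
          / ((((L.set j (L.getD j 0 + 1)).drop i).sum : ℝ) - ((L.length - i : ℕ) : ℝ) * α)
        = Nm α L i / (Dd α L i + 1) := by
    intro i hi
    have hij : i < j := Finset.mem_range.mp hi
    have hds : ((L.set j (L.getD j 0 + 1)).drop i).sum = (L.drop i).sum + 1 := by
      rw [set_drop_le i j L _ hij.le]
      have hlt : j - i < (L.drop i).length := by rw [List.length_drop]; omega
      have hs := set_sum (j - i) (L.drop i) (L.getD j 0 + 1) hlt
      have hgd2 : (L.drop i).getD (j - i) 0 = L.getD j 0 := by
        rw [getD_drop, show i + (j - i) = j from by omega]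
      omega
    rw [getD_set_ne i j L _ (by omega), hds]
    simp only [Nm, Dd]
    push_cast
    ring
  have m2 : (((L.set j (L.getD j 0 + 1)).getD j 0 : ℝ) - α)
        / ((((L.set j (L.getD j 0 + 1)).drop j).sum : ℝ) - ((L.length - j : ℕ) : ℝ) * α)
      = (Nm α L j + 1) / (Dd α L j + 1) := by
    have hds : ((L.set j (L.getD j 0 + 1)).drop j).sum = (L.drop j).sum + 1 := by
      rw [set_drop_le j j L _ le_rfl]
      have hlt : j - j < (L.drop j).length := by rw [List.length_drop]; omega
      have hs := set_sum (j - j) (L.drop j) (L.getD j 0 + 1) hlt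
      have hgd2 : (L.drop j).getD (j - j) 0 = L.getD j 0 := by
        rw [getD_drop, show j + (j - j) = j from by omega]
      omega
    rw [getD_set_self j L _ hj, hds]
    simp only [Nm, Dd]
    push_cast
    ring
  have m3 : ∀ i ∈ Finset.Ico (j + 1) L.length,
      (((L.set j (L.getD j 0 + 1)).getD i 0 : ℝ) - α)
          / ((((L.set j (L.getD j 0 + 1)).drop i).sum : ℝ) - ((L.length - i : ℕ) : ℝ) * α)
        = Nm α L i / Dd α L i := by
    intro i hi
    have h1 : j < i := (Finset.mem_Ico.mp hi).1
    rw [getD_set_ne i j L _ (by omega), set_drop_gt j i L _ h1]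
    rfl
  have wsp : Wf α L
      = ((∏ i ∈ Finset.range j, (ascPochhammer ℝ (L.getD i 0 - 1)).eval (1 - α))
          * (ascPochhammer ℝ (L.getD j 0 - 1)).eval (1 - α))
          * ∏ i ∈ Finset.Ico (j + 1) L.length,
              (ascPochhammer ℝ (L.getD i 0 - 1)).eval (1 - α) := by
    simp only [Wf]
    exact prod_split _ hj
  simp only [tpFun, List.length_set, hsm]
  rw [prod_split _ hj, prod_split _ hj]
  rw [Finset.prod_congr rfl g1, Finset.prod_congr rfl g3, g2,
    Finset.prod_congr rfl m1, Finset.prod_congr rfl m3, m2, wsp]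
  linear_combination (V L.length (L.sum + 1)
      * (((∏ i ∈ Finset.range j, (ascPochhammer ℝ (L.getD i 0 - 1)).eval (1 - α))
          * (ascPochhammer ℝ (L.getD j 0 - 1)).eval (1 - α))
          * ∏ i ∈ Finset.Ico (j + 1) L.length,
              (ascPochhammer ℝ (L.getD i 0 - 1)).eval (1 - α)))
    * formB hα1 hL hj

end G15


theorem stmt_15 (α : ℝ) (hα0 : 0 ≤ α) (hα1 : α < 1)
    (V : ℕ → ℕ → ℝ) (hV : ∀ k n, 1 ≤ k → k ≤ n → 0 < V k n)
    (hcons : ∀ k n, 1 ≤ k → k ≤ n →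
      V k n = ((n : ℝ) - (k : ℝ) * α) * V k (n + 1) + V (k + 1) (n + 1))
    (n : ℕ) (hn : 1 ≤ n) (L : List ℕ) (hL : ∀ x ∈ L, 0 < x) (hsum : L.sum = n) :
    tpFun α V L
      = (∑ j ∈ Finset.range (L.length + 1), tpFun α V (L.insertIdx j 1))
        + ∑ j ∈ Finset.range L.length, tpFun α V (L.set j (L.getD j 0 + 1)) := by
  subst hsum
  open G15 in
  have hk : 1 ≤ L.length := by
    cases L with
    | nil => simp at hn
    | cons x T => simp
  have hkn : L.length ≤ L.sum := List.length_le_sum_of_one_le L (fun i hi => hL i hi)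
  have ha : ∀ i, (0:ℝ) ≤ G15.Dd α L i := G15.Dd_nonneg hα1 hL
  have hins : ∑ j ∈ Finset.range (L.length + 1), tpFun α V (L.insertIdx j 1)
      = V (L.length + 1) (L.sum + 1) * G15.Wf α L * G15.Cf α L := by
    have e : ∀ j ∈ Finset.range (L.length + 1), tpFun α V (L.insertIdx j 1)
        = V (L.length + 1) (L.sum + 1) * G15.Wf α L * G15.Cf α L
          * ((1 - G15.Dd α L j / (G15.Dd α L j + 1 - α))
              * ∏ i ∈ Finset.range j, G15.Dd α L i / (G15.Dd α L i + 1 - α)) :=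
      fun j hjm => G15.tp_ins hα1 V hL (by have := Finset.mem_range.mp hjm; omega)
    rw [Finset.sum_congr rfl e, ← Finset.mul_sum,
      G15.sumA (fun i => G15.Dd α L i / (G15.Dd α L i + 1 - α)) (L.length + 1)]
    have hz : (∏ i ∈ Finset.range (L.length + 1),
        G15.Dd α L i / (G15.Dd α L i + 1 - α)) = 0 :=
      Finset.prod_eq_zero (Finset.self_mem_range_succ L.length)
        (by rw [G15.Dd_ge α L le_rfl]; simp)
    rw [hz]
    ring
  have hset : ∑ j ∈ Finset.range L.length, tpFun α V (L.set j (L.getD j 0 + 1))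
      = V L.length (L.sum + 1) * G15.Wf α L * G15.Cf α L
        * (((L.sum : ℕ) : ℝ) - (L.length : ℝ) * α) := by
    have e : ∀ j ∈ Finset.range L.length, tpFun α V (L.set j (L.getD j 0 + 1))
        = V L.length (L.sum + 1) * G15.Wf α L * G15.Cf α L
          * ((G15.Dd α L j + 1 - G15.Dd α L (j + 1))
              * ∏ i ∈ Finset.range (j + 1), G15.Dd α L i / (G15.Dd α L i + 1)) :=
      fun j hjm => G15.tp_set hα1 V hL (Finset.mem_range.mp hjm)
    have hne : ∀ i, G15.Dd α L i + 1 ≠ 0 := fun i => by have := ha i; linarith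
    rw [Finset.sum_congr rfl e, ← Finset.mul_sum,
      G15.sumB (G15.Dd α L) hne L.length, G15.Dd_ge α L le_rfl]
    have hd0 : G15.Dd α L 0 = ((L.sum : ℕ) : ℝ) - (L.length : ℝ) * α := by
      simp [G15.Dd]
    rw [hd0]
    ring
  have hlhs : tpFun α V L = V L.length L.sum * G15.Wf α L * G15.Cf α L := by
    simp only [tpFun, G15.Wf, G15.Cf, G15.Nm, G15.Dd]
  rw [hlhs, hins, hset, hcons L.length L.sum hk hkn]
  ring
end
end
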